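/- Let ℓ be a line of unit normal ζ_i in a regular multigrid, z ∈ ℓ a multigrid vertex, and for n ∈ ℕ let z_n = z + α_n ζ_i^⊥ be the n-th intersection point of ℓ with other grid lines in direction ζ_i^⊥ (α_n > 0 increasing). Then there is a constant δ₀ depending only on d and the directions ζ such that |α_n - n·χ_i| ≤ δ₀ for all n, where χ_i := (Σ_{j≠i} |ζ_i^⊥·ζ_j|)^{-1}. In particular α_n/n → χ_i. -/

import Mathlib

open Set Filter

noncomputable section

/-- Scalar product on `ℂ ≅ ℝ²`: `z·w := Re(z * conj w)`. -/
def dotp (z w : ℂ) : ℝ := (z * (starRingEnd ℂ) w).re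

/-- Orthogonal vector: `ζ^⊥ := iζ`. -/
def perp (ζ : ℂ) : ℂ := Complex.I * ζ

/-- `z` lies on the grid `G(ζᵢ, γᵢ)`. -/
def onGrid {d : ℕ} (ζ : Fin d → ℂ) (γ : Fin d → ℝ) (i : Fin d) (z : ℂ) : Prop :=
  ∃ m : ℤ, dotp z (ζ i) - γ i = m

/-- The multigrid is regular: no point lies on grids of three distinct directions. -/
def Regular {d : ℕ} (ζ : Fin d → ℂ) (γ : Fin d → ℝ) : Prop :=
  ∀ z : ℂ, Set.ncard {i : Fin d | onGrid ζ γ i z} ≤ 2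

/-- The characteristic length `χᵢ := (∑_{j≠i} |ζᵢ^⊥·ζⱼ|)⁻¹`. -/
def charLen {d : ℕ} (ζ : Fin d → ℂ) (i : Fin d) : ℝ :=
  (∑ j ∈ Finset.univ.erase i, |dotp (perp (ζ i)) (ζ j)|)⁻¹

lemma dotp_perp (ζ w : ℂ) : dotp (perp ζ) w = (w * (starRingEnd ℂ) ζ).im := by
  simp [dotp, perp, Complex.mul_re, Complex.mul_im]
  ring

lemma dotp_add_smul (z w v : ℂ) (t : ℝ) :
    dotp (z + t • w) v = dotp z v + t * dotp w v := by
  simp [dotp, add_mul, Complex.add_re, Complex.real_smul, Complex.mul_re, Complex.mul_im]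
  ring

lemma perp_dot_self (ζ : ℂ) : dotp (perp ζ) ζ = 0 := by
  rw [dotp_perp, Complex.mul_conj]
  simp

def latSet (c e T : ℝ) : Set ℝ := {t : ℝ | 0 < t ∧ t ≤ T ∧ ∃ m : ℤ, e + t * c = m}

lemma latSet_neg (c e T : ℝ) : latSet c e T = latSet (-c) (-e) T := by
  ext t
  simp only [latSet, Set.mem_setOf_eq]
  refine and_congr_right fun _ => and_congr_right fun _ => ⟨?_, ?_⟩
  · rintro ⟨m, hm⟩; exact ⟨-m, by push_cast; linarith⟩
  · rintro ⟨m, hm⟩; exact ⟨-m, by push_cast; linarith⟩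

lemma latSet_eq_image (c e T : ℝ) (hc : 0 < c) :
    latSet c e T = (fun m : ℤ => ((m : ℝ) - e)/c) '' ↑(Finset.Ioc ⌊e⌋ ⌊e + T * c⌋) := by
  ext t
  simp only [latSet, Set.mem_setOf_eq, Set.mem_image, Finset.mem_coe, Finset.mem_Ioc,
    Int.floor_lt, Int.le_floor]
  constructor
  · rintro ⟨ht0, htT, m, hm⟩
    have hm' : (m : ℝ) = e + t * c := hm.symm
    refine ⟨m, ⟨by nlinarith, by nlinarith⟩, ?_⟩
    field_simp [hm']
    linarith
  · rintro ⟨m, ⟨h1, h2⟩, rfl⟩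
    refine ⟨div_pos (by linarith) hc, ?_, m, by field_simp; ring⟩
    rw [div_le_iff₀ hc]
    linarith

lemma latSet_card_pos (c e T : ℝ) (hc : 0 < c) (hT : 0 ≤ T) :
    (latSet c e T).Finite ∧ |((latSet c e T).ncard : ℝ) - c * T| ≤ 1 := by
  have hinj : Function.Injective (fun m : ℤ => ((m : ℝ) - e)/c) := by
    intro a b h
    simp only [div_eq_div_iff (ne_of_gt hc) (ne_of_gt hc)] at h
    have h' : (a : ℝ) = b := by
      have := mul_right_cancel₀ (ne_of_gt hc) h
      linarith
    exact_mod_cast h'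
  rw [latSet_eq_image c e T hc]
  constructor
  · exact ((Finset.Ioc ⌊e⌋ ⌊e + T * c⌋).finite_toSet).image _
  · rw [Set.ncard_image_of_injective _ hinj, Set.ncard_coe_finset, Int.card_Ioc]
    have hle : ⌊e⌋ ≤ ⌊e + T * c⌋ := Int.floor_le_floor (by nlinarith)
    have h0 : ((⌊e + T * c⌋ - ⌊e⌋).toNat : ℤ) = ⌊e + T * c⌋ - ⌊e⌋ := Int.toNat_of_nonneg (by omega)
    have hc2 : ((⌊e + T * c⌋ - ⌊e⌋).toNat : ℝ) = (⌊e + T * c⌋ : ℝ) - (⌊e⌋ : ℝ) := by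
      exact_mod_cast congrArg (fun x : ℤ => (x : ℝ)) h0
    rw [hc2]
    have h1 := Int.floor_le e
    have h2 := Int.lt_floor_add_one e
    have h3 := Int.floor_le (e + T * c)
    have h4 := Int.lt_floor_add_one (e + T * c)
    rw [abs_le]; constructor <;> linarith

lemma latSet_card (c e T : ℝ) (hc : c ≠ 0) (hT : 0 ≤ T) :
    (latSet c e T).Finite ∧ |((latSet c e T).ncard : ℝ) - |c| * T| ≤ 1 := by
  rcases hc.lt_or_gt with h | h
  · rw [latSet_neg, abs_of_neg h]
    exact latSet_card_pos (-c) (-e) T (by linarith) hT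
  · rw [abs_of_pos h]
    exact latSet_card_pos c e T h hT

lemma dotp_perp_ne {d : ℕ} (ζ : Fin d → ℂ) (i j : Fin d) (hne : i ≠ j)
    (hunit : ∀ k, ‖ζ k‖ = 1)
    (hnonpar : ∀ j k : Fin d, j ≠ k → ∀ t : ℝ, ζ k ≠ t • ζ j) :
    dotp (perp (ζ i)) (ζ j) ≠ 0 := by
  rw [dotp_perp]
  intro h0
  set u := ζ j * (starRingEnd ℂ) (ζ i) with hu
  have hre : u = (u.re : ℂ) := Complex.ext rfl (by simpa using h0)
  apply hnonpar i j hne u.re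
  have h1 : (starRingEnd ℂ) (ζ i) * ζ i = 1 := by
    rw [mul_comm, Complex.mul_conj]
    norm_cast
    rw [Complex.normSq_eq_norm_sq, hunit i]
    norm_num
  calc ζ j = ζ j * ((starRingEnd ℂ) (ζ i) * ζ i) := by rw [h1, mul_one]
    _ = u * ζ i := by rw [hu]; ring
    _ = (u.re : ℂ) * ζ i := by rw [← hre]
    _ = u.re • ζ i := Complex.real_smul.symm

/-- Let `z` be a point on an `i`-line of a regular multigrid, and `z + αₙ ζᵢ^⊥` the `n`-th
intersection point of that line with other grid lines in direction `ζᵢ^⊥`.  There is a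
constant `δ₀` depending only on `d` and the directions `ζ` such that `|αₙ − n·χᵢ| ≤ δ₀`
for all `n`; in particular `αₙ/n → χᵢ`. -/
theorem nth_intersection_point (d : ℕ) (ζ : Fin d → ℂ) (i : Fin d)
    (hd : 2 ≤ d)
    (hunit : ∀ j, ‖ζ j‖ = 1)
    (hnonpar : ∀ j k : Fin d, j ≠ k → ∀ t : ℝ, ζ k ≠ t • ζ j) :
    ∃ δ₀ : ℝ, ∀ (γ : Fin d → ℝ) (z : ℂ) (α : ℕ → ℝ),
      Regular ζ γ →
      onGrid ζ γ i z →
      StrictMono α →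
      (∀ n, 0 < α n) →
      -- each `z + αₙ ζᵢ^⊥` is an intersection point with another grid line
      (∀ n, ∃ j, j ≠ i ∧ onGrid ζ γ j (z + α n • perp (ζ i))) →
      -- and every intersection point in direction `ζᵢ^⊥` is one of the `z + αₙ ζᵢ^⊥`
      (∀ x : ℝ, 0 < x → (∃ j, j ≠ i ∧ onGrid ζ γ j (z + x • perp (ζ i))) → ∃ n, α n = x) →
      (∀ n : ℕ, |α n - n * charLen ζ i| ≤ δ₀) ∧
        Tendsto (fun n : ℕ => α n / n) atTop (nhds (charLen ζ i)) := by
  classical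
  set χ := charLen ζ i with hχ
  set c : Fin d → ℝ := fun j => dotp (perp (ζ i)) (ζ j) with hcdef
  have hcne : ∀ j : Fin d, j ≠ i → c j ≠ 0 := fun j hj =>
    dotp_perp_ne ζ i j (Ne.symm hj) hunit hnonpar
  set K := ∑ j ∈ Finset.univ.erase i, |c j| with hK
  have hKpos : 0 < K := by
    have hne : (Finset.univ.erase i).Nonempty := by
      rw [← Finset.card_pos, Finset.card_erase_of_mem (Finset.mem_univ i), Finset.card_univ,
        Fintype.card_fin]
      omega
    refine Finset.sum_pos (fun j hj => ?_) hne
    exact abs_pos.mpr (hcne j (Finset.mem_erase.mp hj).1)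
  have hχK : χ = K⁻¹ := rfl
  have hχpos : 0 < χ := by rw [hχK]; exact inv_pos.mpr hKpos
  refine ⟨d * χ, fun γ z α hreg hz hmono hpos hint hsur => ?_⟩
  set e : Fin d → ℝ := fun j => dotp z (ζ j) - γ j with hedef
  have hgrid : ∀ (j : Fin d) (t : ℝ),
      onGrid ζ γ j (z + t • perp (ζ i)) ↔ ∃ m : ℤ, e j + t * c j = m := by
    intro j t
    unfold onGrid
    rw [dotp_add_smul]
    exact exists_congr fun m => by constructor <;> intro h <;> · simp only [hedef, hcdef] at *; linarith
  -- the key counting estimate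
  have key : ∀ n : ℕ, |((n : ℝ) + 1) - K * α n| ≤ (d : ℝ) - 1 := by
    intro n
    set T := α n with hT
    have hT0 : 0 ≤ T := le_of_lt (hpos n)
    set F : Fin d → Finset ℝ := fun j =>
      if h : c j ≠ 0 then (latSet_card (c j) (e j) T h hT0).1.toFinset else ∅ with hF
    have hFmem : ∀ j : Fin d, j ≠ i → ∀ t : ℝ, t ∈ F j ↔ t ∈ latSet (c j) (e j) T := by
      intro j hj t
      simp only [hF, dif_pos (hcne j hj), Set.Finite.mem_toFinset]
    -- the union equals the image of α on Iic n
    have hUnion : α '' (Set.Iic n) = ↑((Finset.univ.erase i).biUnion F) := by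
      ext t
      simp only [Set.mem_image, Finset.coe_biUnion, Finset.mem_coe, Finset.mem_erase,
        Set.mem_iUnion, Finset.mem_univ, and_true, exists_prop]
      constructor
      · rintro ⟨k, hk, rfl⟩
        obtain ⟨j, hj, hgridj⟩ := hint k
        refine ⟨j, hj, ?_⟩
        rw [hFmem j hj]
        exact ⟨hpos k, hmono.monotone hk, (hgrid j (α k)).mp hgridj⟩
      · rintro ⟨j, hj, htF⟩
        rw [hFmem j hj] at htF
        obtain ⟨ht0, htT, hm⟩ := htF
        obtain ⟨k, hk⟩ := hsur t ht0 ⟨j, hj, (hgrid j t).mpr hm⟩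
        refine ⟨k, ?_, hk⟩
        rw [← hk] at htT
        exact (hmono.le_iff_le).mp htT
    -- disjointness
    have hdisj : ∀ j1 ∈ Finset.univ.erase i, ∀ j2 ∈ Finset.univ.erase i, j1 ≠ j2 →
        Disjoint (F j1) (F j2) := by
      intro j1 hj1 j2 hj2 hne12
      rw [Finset.disjoint_left]
      intro t ht1 ht2
      have hj1i := (Finset.mem_erase.mp hj1).1
      have hj2i := (Finset.mem_erase.mp hj2).1
      rw [hFmem j1 hj1i] at ht1
      rw [hFmem j2 hj2i] at ht2
      set p := z + t • perp (ζ i) with hp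
      have hon1 : onGrid ζ γ j1 p := (hgrid j1 t).mpr ht1.2.2
      have hon2 : onGrid ζ γ j2 p := (hgrid j2 t).mpr ht2.2.2
      have honi : onGrid ζ γ i p := by
        obtain ⟨m, hm⟩ := hz
        exact ⟨m, by rw [hp, dotp_add_smul, perp_dot_self]; simpa using hm⟩
      have hsub : ({i, j1, j2} : Set (Fin d)) ⊆ {l : Fin d | onGrid ζ γ l p} := by
        intro l hl
        simp only [Set.mem_insert_iff, Set.mem_singleton_iff] at hl
        rcases hl with rfl | rfl | rfl
        · exact honi
        · exact hon1
        · exact hon2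
      have h3 : ({i, j1, j2} : Set (Fin d)).ncard = 3 :=
        Set.ncard_eq_three.mpr ⟨i, j1, j2, Ne.symm hj1i, Ne.symm hj2i, hne12, rfl⟩
      have := Set.ncard_le_ncard hsub (Set.toFinite _)
      have := hreg p
      omega
    -- compute the cardinality two ways
    have hcard1 : (α '' (Set.Iic n)).ncard = n + 1 := by
      rw [Set.ncard_image_of_injective _ hmono.injective, ← Finset.coe_Iic,
        Set.ncard_coe_finset, Nat.card_Iic]
    have hcard2 : ((Finset.univ.erase i).biUnion F).card
        = ∑ j ∈ Finset.univ.erase i, (F j).card := Finset.card_biUnion hdisj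
    have hcards : (n : ℝ) + 1 = ∑ j ∈ Finset.univ.erase i, ((F j).card : ℝ) := by
      have : (n + 1 : ℕ) = ∑ j ∈ Finset.univ.erase i, (F j).card := by
        rw [← hcard1, hUnion, Set.ncard_coe_finset, hcard2]
      exact_mod_cast this
    -- per-grid estimate
    have hperj : ∀ j ∈ Finset.univ.erase i, |((F j).card : ℝ) - |c j| * T| ≤ 1 := by
      intro j hj
      have hji := (Finset.mem_erase.mp hj).1
      have hlc := latSet_card (c j) (e j) T (hcne j hji) hT0
      have hFj : F j = (latSet_card (c j) (e j) T (hcne j hji) hT0).1.toFinset :=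
        dif_pos (hcne j hji)
      rw [hFj, ← Set.ncard_eq_toFinset_card _ (latSet_card (c j) (e j) T (hcne j hji) hT0).1]
      exact hlc.2
    calc |((n : ℝ) + 1) - K * α n|
        = |∑ j ∈ Finset.univ.erase i, (((F j).card : ℝ) - |c j| * T)| := by
          rw [hcards, hK, Finset.sum_sub_distrib, Finset.sum_mul]
      _ ≤ ∑ j ∈ Finset.univ.erase i, |((F j).card : ℝ) - |c j| * T| :=
          Finset.abs_sum_le_sum_abs _ _
      _ ≤ ∑ _j ∈ Finset.univ.erase i, (1 : ℝ) := Finset.sum_le_sum hperj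
      _ = (d : ℝ) - 1 := by
          rw [Finset.sum_const, Finset.card_erase_of_mem (Finset.mem_univ i), Finset.card_univ,
            Fintype.card_fin]
          have : (1:ℕ) ≤ d := by omega
          field_simp
          simp [Nat.cast_sub this]
  -- derive the two conclusions
  have hbound : ∀ n : ℕ, |α n - n * χ| ≤ d * χ := by
    intro n
    have hkn := key n
    have heq : α n - n * χ = χ * ((K * α n - ((n : ℝ) + 1)) + 1) := by
      rw [hχK]
      field_simp
      ring
    rw [heq, abs_mul, abs_of_pos hχpos]
    have h1 : |K * α n - ((n : ℝ) + 1) + 1| ≤ (d : ℝ) := by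
      rw [abs_sub_comm] at hkn
      calc |K * α n - ((n : ℝ) + 1) + 1| ≤ |K * α n - ((n : ℝ) + 1)| + |1| := abs_add_le _ _
        _ ≤ ((d : ℝ) - 1) + 1 := by rw [abs_one]; linarith
        _ = d := by ring
    calc χ * |K * α n - ((n : ℝ) + 1) + 1| ≤ χ * d := by
          exact mul_le_mul_of_nonneg_left h1 (le_of_lt hχpos)
      _ = d * χ := mul_comm _ _
  refine ⟨hbound, ?_⟩
  rw [tendsto_iff_norm_sub_tendsto_zero]
  have h0 : Tendsto (fun n : ℕ => (d * χ) / n) atTop (nhds 0) :=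
    Tendsto.div_atTop tendsto_const_nhds tendsto_natCast_atTop_atTop
  refine squeeze_zero' (Eventually.of_forall fun n => norm_nonneg _) ?_ h0
  filter_upwards [eventually_ge_atTop 1] with n hn
  have hn0 : (0 : ℝ) < n := by exact_mod_cast hn
  have : α n / n - χ = (α n - n * χ) / n := by field_simp
  rw [Real.norm_eq_abs, this, abs_div, abs_of_pos hn0]
  gcongr
  exact hbound n
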